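/- Suppose f : D₁ → D₁ is holomorphic with f(0) = 0 and |f'(0)| = δ > 0. For any η ∈ (0, δ), set s = ((δ-η)/(1-ηδ))·η. Then the restriction of f to the disk D_η takes each value w ∈ D_s exactly once, i.e., for every w with |w| < s there is a unique z with |z| < η and f(z) = w. -/

import Mathlib

open Metric Set Complex Filter

set_option maxHeartbeats 1000000

lemma normSq_mobius (u v : ℂ) :
    Complex.normSq (1 - (starRingEnd ℂ) v * u) - Complex.normSq (u - v)
      = (1 - Complex.normSq u) * (1 - Complex.normSq v) := by
  simp only [Complex.normSq_apply, Complex.sub_re, Complex.sub_im, Complex.mul_re,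
    Complex.mul_im, Complex.conj_re, Complex.conj_im, Complex.one_re, Complex.one_im]
  ring

lemma one_sub_abs_le {x : ℂ} : 1 - ‖x‖ ≤ ‖(1 - x)‖ := by
  simpa using norm_sub_norm_le (1 : ℂ) x

lemma mobius_lt_one {u v : ℂ} (hu : ‖u‖ < 1) (hv : ‖v‖ < 1) :
    ‖((u - v) / (1 - (starRingEnd ℂ) v * u))‖ < 1 := by
  have h1 : ‖((starRingEnd ℂ) v * u)‖ < 1 := by
    rw [norm_mul, Complex.norm_conj]
    nlinarith [norm_nonneg u, norm_nonneg v]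
  have hden : 0 < ‖(1 - (starRingEnd ℂ) v * u)‖ := by
    have := one_sub_abs_le (x := (starRingEnd ℂ) v * u)
    linarith
  rw [norm_div, div_lt_one hden]
  have hsq : ‖(u - v)‖ ^ 2 < ‖(1 - (starRingEnd ℂ) v * u)‖ ^ 2 := by
    rw [Complex.sq_norm, Complex.sq_norm]
    have h2 := normSq_mobius u v
    have h3 : Complex.normSq u < 1 := by
      rw [← Complex.sq_norm]; nlinarith [norm_nonneg u]
    have h4 : Complex.normSq v < 1 := by
      rw [← Complex.sq_norm]; nlinarith [norm_nonneg v]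
    nlinarith
  nlinarith [norm_nonneg (u - v)]

-- pseudo-hyperbolic distance lower bound
lemma pseudo_bound {u v : ℂ} {r a : ℝ} (hu : ‖u‖ = r) (hv : ‖v‖ = a)
    (har : a < r) (hr : r ≤ 1) :
    (r - a) * ‖(1 - (starRingEnd ℂ) v * u)‖ ≤ (1 - a * r) * ‖(u - v)‖ := by
  have ha0 : 0 ≤ a := hv ▸ norm_nonneg v
  have hr0 : 0 ≤ r := hu ▸ norm_nonneg u
  set X := ‖(u - v)‖ with hX
  set Y := ‖(1 - (starRingEnd ℂ) v * u)‖ with hY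
  have hX0 : 0 ≤ X := norm_nonneg _
  have hY0 : 0 ≤ Y := norm_nonneg _
  have hid : Y ^ 2 - X ^ 2 = (1 - r ^ 2) * (1 - a ^ 2) := by
    rw [hX, hY, Complex.sq_norm, Complex.sq_norm, normSq_mobius, ← Complex.sq_norm,
      ← Complex.sq_norm, hu, hv]
  have hYlb : 1 - a * r ≤ Y := by
    have := one_sub_abs_le (x := (starRingEnd ℂ) v * u)
    rw [norm_mul, Complex.norm_conj, hv, hu] at this
    linarith
  have har1 : 0 ≤ 1 - a * r := by nlinarith
  have hsq : (r - a) ^ 2 * Y ^ 2 ≤ (1 - a * r) ^ 2 * X ^ 2 := by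
    have h5a : 0 ≤ 1 - r ^ 2 := by nlinarith
    have h5b : 0 ≤ 1 - a ^ 2 := by nlinarith
    have h5 : 0 ≤ (1 - r ^ 2) * (1 - a ^ 2) := mul_nonneg h5a h5b
    have h6 : 0 ≤ Y ^ 2 - (1 - a * r) ^ 2 := by nlinarith
    nlinarith [mul_nonneg h5 h6]
  have hL0 : 0 ≤ (r - a) * Y := mul_nonneg (by linarith) hY0
  have hR0 : 0 ≤ (1 - a * r) * X := mul_nonneg har1 hX0
  nlinarith [hsq, hL0, hR0]

lemma schwarz_pick_lower {f : ℂ → ℂ} {δ : ℝ}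
    (hdiff : DifferentiableOn ℂ f (ball 0 1))
    (hmaps : Set.MapsTo f (ball 0 1) (ball 0 1))
    (hf0 : f 0 = 0) (hδ : ‖(deriv f 0)‖ = δ) (hδ1 : δ < 1)
    {z : ℂ} (hz : z ∈ ball (0:ℂ) 1) :
    ‖z‖ * (δ - ‖z‖) ≤ ‖(f z)‖ * (1 - δ * ‖z‖) := by
  have hδ0 : 0 ≤ δ := hδ ▸ norm_nonneg _
  have h01 : (0:ℂ) ∈ ball (0:ℂ) 1 := mem_ball_self one_pos
  set g := dslope f 0 with hg
  have hmaps' : Set.MapsTo f (ball 0 1) (ball (f 0) 1) := by rwa [hf0]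
  have hg1 : ∀ u ∈ ball (0:ℂ) 1, ‖(g u)‖ ≤ 1 := fun u hu => by
    simpa using norm_dslope_le_div_of_mapsTo_ball hdiff (hmaps'.mono_right ball_subset_closedBall) hu
  have hgd : DifferentiableOn ℂ g (ball 0 1) :=
    (differentiableOn_dslope (isOpen_ball.mem_nhds h01)).mpr hdiff
  set a := deriv f 0 with ha
  have hg0 : g 0 = a := dslope_same f 0
  have haδ : ‖a‖ = δ := hδ
  have ht0 : 0 ≤ ‖z‖ := norm_nonneg z
  have ht1 : ‖z‖ < 1 := mem_ball_zero_iff.1 hz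
  have hkey : ‖(g z - a)‖ * (1 - δ * ‖z‖)
      ≤ ‖z‖ * (1 - δ ^ 2) := by
    by_cases hgc : ∀ u ∈ ball (0:ℂ) 1, g u = a
    · rw [hgc z hz, sub_self, norm_zero, zero_mul]
      have : (0:ℝ) ≤ 1 - δ ^ 2 := by nlinarith
      exact mul_nonneg ht0 this
    · have hlt : ∀ u ∈ ball (0:ℂ) 1, ‖(g u)‖ < 1 := by
        intro u hu
        rcases lt_or_eq_of_le (hg1 u hu) with h | h
        · exact h
        · exfalso
          have hmax : IsMaxOn (norm ∘ g) (ball (0:ℂ) 1) u := by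
            refine isMaxOn_iff.mpr fun v hv => ?_
            simp only [Function.comp_apply, h]
            exact hg1 v hv
          have heq := eqOn_of_isPreconnected_of_isMaxOn_norm
            (convex_ball (0:ℂ) 1).isPreconnected isOpen_ball hgd hu hmax
          push_neg at hgc
          obtain ⟨u', hu', hne⟩ := hgc
          refine hne ?_
          have e1 := heq hu'
          have e2 := heq h01
          simp only [Function.const_apply] at e1 e2
          rw [e1, ← e2, hg0]
      have hden : ∀ u ∈ ball (0:ℂ) 1, (1 - (starRingEnd ℂ) a * g u) ≠ 0 := by
        intro u hu h
        have h2 : ‖((starRingEnd ℂ) a * g u)‖ < 1 := by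
          rw [norm_mul, Complex.norm_conj, haδ]
          nlinarith [hlt u hu, norm_nonneg (g u)]
        rw [sub_eq_zero] at h
        rw [← h] at h2
        simp at h2
      set k := fun u => (g u - a) / (1 - (starRingEnd ℂ) a * g u) with hk
      have hkd : DifferentiableOn ℂ k (ball 0 1) := by
        refine DifferentiableOn.div (hgd.sub (differentiableOn_const a))
          ((differentiableOn_const 1).sub ((differentiableOn_const _).mul hgd)) hden
      have hkm : Set.MapsTo k (ball 0 1) (ball 0 1) := by
        intro u hu
        rw [mem_ball_zero_iff]
        exact mobius_lt_one (hlt u hu) (by rw [haδ]; exact hδ1)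
      have hk0 : k 0 = 0 := by simp [hk, hg0]
      have hkz : ‖(k z)‖ ≤ ‖z‖ :=
        norm_le_norm_of_mapsTo_ball hkd (hkm.mono_right ball_subset_closedBall) hk0 ht1
      have e1 : g z - a = k z * (1 - (starRingEnd ℂ) a * g z) :=
        (div_mul_cancel₀ _ (hden z hz)).symm
      have e2 : ‖(g z - a)‖
          ≤ ‖z‖ * ‖(1 - (starRingEnd ℂ) a * g z)‖ := by
        rw [e1, norm_mul]
        exact mul_le_mul_of_nonneg_right hkz (norm_nonneg _)
      have e3 : ‖(1 - (starRingEnd ℂ) a * g z)‖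
          ≤ (1 - δ ^ 2) + δ * ‖(g z - a)‖ := by
        have hsplit : (1 : ℂ) - (starRingEnd ℂ) a * g z
            = (1 - (starRingEnd ℂ) a * a) - (starRingEnd ℂ) a * (g z - a) := by ring
        rw [hsplit]
        have htr := norm_sub_le (1 - (starRingEnd ℂ) a * a) ((starRingEnd ℂ) a * (g z - a))
        refine le_trans htr ?_
        have h4 : (starRingEnd ℂ) a * a = (Complex.normSq a : ℂ) := by
          rw [mul_comm, Complex.mul_conj]
        have h5 : ‖(1 - (starRingEnd ℂ) a * a)‖ = 1 - δ ^ 2 := by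
          have hnsq : Complex.normSq a = δ ^ 2 := by rw [← Complex.sq_norm, haδ]
          have hcast : (1 : ℂ) - (starRingEnd ℂ) a * a = ((1 - δ ^ 2 : ℝ) : ℂ) := by
            rw [h4, hnsq]; push_cast; ring
          rw [hcast, Complex.norm_real, Real.norm_eq_abs]
          exact abs_of_nonneg (by nlinarith)
        rw [h5, norm_mul, Complex.norm_conj, haδ]
      nlinarith [mul_le_mul_of_nonneg_left e3 ht0, e2]
  have hfz : f z = z * g z := by
    have h6 := sub_smul_dslope f 0 z
    simp only [sub_zero, smul_eq_mul, hf0] at h6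
    rw [← h6]
  rw [hfz, norm_mul]
  have htri : δ ≤ ‖(g z)‖ + ‖(g z - a)‖ := by
    have h7 := norm_sub_le (g z) (g z - a)
    simp only [sub_sub_cancel] at h7
    rw [← haδ]; exact h7
  have h1δt : 0 ≤ 1 - δ * ‖z‖ := by nlinarith
  nlinarith [hkey, htri, norm_nonneg (g z), norm_nonneg (g z - a),
    mul_nonneg (mul_nonneg ht0 (sub_nonneg.2 htri)) h1δt]

lemma blaschke_two_zeros {F : ℂ → ℂ}
    (hd : DifferentiableOn ℂ F (ball 0 1))
    (hm : Set.MapsTo F (ball 0 1) (ball 0 1))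
    {z1 z2 : ℂ} (h1 : z1 ∈ ball (0:ℂ) 1) (h2 : z2 ∈ ball (0:ℂ) 1)
    (hne : z1 ≠ z2) (hF1 : F z1 = 0) (hF2 : F z2 = 0) :
    ‖(F 0)‖ ≤ ‖z1‖ * ‖z2‖ := by
  set a := ‖z1‖ with haa
  set b := ‖z2‖ with hbb
  have ha1 : a < 1 := mem_ball_zero_iff.1 h1
  have hb1 : b < 1 := mem_ball_zero_iff.1 h2
  have ha0 : 0 ≤ a := norm_nonneg _
  have hb0 : 0 ≤ b := norm_nonneg _
  set G := dslope (dslope F z1) z2 with hG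
  have hGd : DifferentiableOn ℂ G (ball 0 1) :=
    (differentiableOn_dslope (isOpen_ball.mem_nhds h2)).mpr
      ((differentiableOn_dslope (isOpen_ball.mem_nhds h1)).mpr hd)
  have e1 : ∀ z : ℂ, (z - z1) * dslope F z1 z = F z := fun z => by
    have h := sub_smul_dslope F z1 z
    rw [smul_eq_mul, hF1, sub_zero] at h
    exact h
  have e2 : dslope F z1 z2 = 0 := by
    rw [dslope_of_ne F (Ne.symm hne), slope_def_field, hF1, hF2]
    simp
  have e3 : ∀ z : ℂ, (z - z2) * G z = dslope F z1 z := fun z => by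
    have h := sub_smul_dslope (dslope F z1) z2 z
    rw [smul_eq_mul, e2, sub_zero] at h
    exact h
  have efact : ∀ z : ℂ, F z = (z - z1) * ((z - z2) * G z) := fun z => by
    rw [e3, e1]
  have key : ∀ r : ℝ, r ∈ Set.Ioo (max a b) 1 →
      ‖(G 0)‖ ≤ ((1 - a*r)*(1 - b*r))/((r - a)*(r - b)) := by
    intro r hr
    obtain ⟨hrab, hr1⟩ := hr
    have hra : a < r := lt_of_le_of_lt (le_max_left a b) hrab
    have hrb : b < r := lt_of_le_of_lt (le_max_right a b) hrab
    have hr0 : 0 < r := lt_of_le_of_lt ha0 hra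
    have har1 : 0 < 1 - a*r := by nlinarith
    have hbr1 : 0 < 1 - b*r := by nlinarith
    set H := fun z => G z * ((1 - (starRingEnd ℂ) z1 * z) * (1 - (starRingEnd ℂ) z2 * z))
      with hH
    have hHd : DifferentiableOn ℂ H (ball 0 1) := by
      apply hGd.mul
      exact (((differentiableOn_const 1).sub
          ((differentiableOn_const _).mul differentiableOn_id)).mul
        (((differentiableOn_const 1).sub
          ((differentiableOn_const _).mul differentiableOn_id))))
    have hcl : closure (ball (0:ℂ) r) = closedBall 0 r := closure_ball 0 hr0.ne'
    have hdc : DiffContOnCl ℂ H (ball 0 r) := ⟨hHd.mono (ball_subset_ball hr1.le),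
      by rw [hcl]; exact (hHd.continuousOn).mono (closedBall_subset_ball hr1)⟩
    have hfr : ∀ z ∈ frontier (ball (0:ℂ) r),
        ‖H z‖ ≤ ((1 - a*r)*(1 - b*r))/((r - a)*(r - b)) := by
      intro z hz
      rw [frontier_ball 0 hr0.ne'] at hz
      have hzr : ‖z‖ = r := by
        exact mem_sphere_zero_iff_norm.1 hz
      have hzb : z ∈ ball (0:ℂ) 1 := mem_ball_zero_iff.2 (by rw [hzr]; exact hr1)
      have p1 := pseudo_bound hzr haa.symm hra hr1.le
      have p2 := pseudo_bound hzr hbb.symm hrb hr1.le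
      have hFle : ‖(F z)‖ ≤ 1 := le_of_lt (by
        have := hm hzb
        rwa [mem_ball_zero_iff] at this)
      have hFz : ‖(F z)‖
          = ‖(z - z1)‖ * (‖(z - z2)‖ * ‖(G z)‖) := by
        rw [efact z, norm_mul, norm_mul]
      set A1 := ‖(z - z1)‖
      set A2 := ‖(z - z2)‖
      set B1 := ‖(1 - (starRingEnd ℂ) z1 * z)‖
      set B2 := ‖(1 - (starRingEnd ℂ) z2 * z)‖
      set Gz := ‖(G z)‖
      have hGz0 : 0 ≤ Gz := norm_nonneg _
      have hB1 : 0 ≤ B1 := norm_nonneg _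
      have hB2 : 0 ≤ B2 := norm_nonneg _
      have hA1 : 0 ≤ A1 := norm_nonneg _
      have hA2 : 0 ≤ A2 := norm_nonneg _
      have hq : ((r-a)*B1) * ((r-b)*B2) ≤ ((1-a*r)*A1) * ((1-b*r)*A2) :=
        mul_le_mul p1 p2 (mul_nonneg (by linarith) hB2) (mul_nonneg har1.le hA1)
      have hq2 : Gz * (((r-a)*B1) * ((r-b)*B2)) ≤ Gz * (((1-a*r)*A1) * ((1-b*r)*A2)) :=
        mul_le_mul_of_nonneg_left hq hGz0
      have hq3 : (1-a*r)*(1-b*r)*(‖(F z)‖) ≤ (1-a*r)*(1-b*r) := by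
        nlinarith [mul_le_mul_of_nonneg_left hFle (mul_nonneg har1.le hbr1.le)]
      have hHz : ‖H z‖ = Gz * (B1 * B2) := by
        rw [hH]
        simp only [norm_mul]; rfl
      have hq4 : (1-a*r)*(1-b*r)*(A1*(A2*Gz)) ≤ (1-a*r)*(1-b*r) := by
        rw [← hFz]; exact hq3
      rw [hHz, le_div_iff₀ (by nlinarith : (0:ℝ) < (r-a)*(r-b))]
      nlinarith [hq2, hq4]
    have h00 : (0:ℂ) ∈ closure (ball (0:ℂ) r) := by
      rw [hcl]; exact mem_closedBall_self hr0.le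
    have hb := norm_le_of_forall_mem_frontier_norm_le isBounded_ball hdc hfr h00
    have hH0 : ‖H 0‖ = ‖(G 0)‖ := by
      simp [hH]
    rwa [hH0] at hb
  have hG0 : ‖(G 0)‖ ≤ 1 := by
    have hmab : max a b < 1 := max_lt ha1 hb1
    have hev : ∀ᶠ r in nhdsWithin (1:ℝ) (Set.Iio 1),
        ‖(G 0)‖ ≤ ((1 - a*r)*(1 - b*r))/((r - a)*(r - b)) := by
      filter_upwards [Ioo_mem_nhdsLT_of_mem (Set.mem_Ioc.2 ⟨hmab, le_refl 1⟩)] with r hr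
      exact key r hr
    have hpos : (0:ℝ) < (1 - a) * (1 - b) := by nlinarith
    have hc1 : ContinuousAt (fun r : ℝ => (1 - a*r)*(1 - b*r)) 1 :=
      ((continuous_const.sub (continuous_const.mul continuous_id)).mul
        (continuous_const.sub (continuous_const.mul continuous_id))).continuousAt
    have hc2 : ContinuousAt (fun r : ℝ => (r - a)*(r - b)) 1 :=
      ((continuous_id.sub continuous_const).mul
        (continuous_id.sub continuous_const)).continuousAt
    have hcne : ((fun r : ℝ => (r - a)*(r - b)) 1) ≠ 0 := by
      show ((1:ℝ) - a)*(1 - b) ≠ 0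
      exact hpos.ne'
    have hc : ContinuousAt (fun r : ℝ => ((1 - a*r)*(1 - b*r))/((r - a)*(r - b))) 1 :=
      ContinuousAt.div hc1 hc2 hcne
    have hval : ((1 - a*1)*(1 - b*1))/((1 - a)*(1 - b)) = 1 := by
      rw [mul_one, mul_one, div_self hpos.ne']
    have hlim : Tendsto (fun r : ℝ => ((1 - a*r)*(1 - b*r))/((r - a)*(r - b)))
        (nhdsWithin (1:ℝ) (Set.Iio 1)) (nhds 1) := by
      have h9 := hc.tendsto.mono_left (nhdsWithin_le_nhds (s := Set.Iio (1:ℝ)))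
      simp only [mul_one] at h9
      rwa [div_self hpos.ne'] at h9
    exact ge_of_tendsto hlim hev
  have hF0 : ‖(F 0)‖ = a * (b * ‖(G 0)‖) := by
    rw [efact 0, norm_mul, norm_mul]
    simp [haa, hbb]
  rw [hF0]
  nlinarith [norm_nonneg (G 0), mul_nonneg (mul_nonneg ha0 hb0) (sub_nonneg.2 hG0)]

theorem stmt12 (f : ℂ → ℂ) (δ η s : ℝ)
    (hdiff : DifferentiableOn ℂ f (Metric.ball 0 1))
    (hmaps : Set.MapsTo f (Metric.ball 0 1) (Metric.ball 0 1))
    (hf0 : f 0 = 0) (hδ : ‖deriv f 0‖ = δ) (hδpos : 0 < δ)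
    (hη0 : 0 < η) (hηδ : η < δ) (hs : s = (δ - η) / (1 - η * δ) * η) :
    ∀ w : ℂ, ‖w‖ < s →
      ∃! z : ℂ, ‖z‖ < η ∧ f z = w := by
  intro w hw
  have hδ1 : δ ≤ 1 := by
    rw [← hδ]; exact Complex.norm_deriv_le_one_of_mapsTo_ball hdiff (by rw [hf0]; exact hmaps.mono_right ball_subset_closedBall) one_pos
  have hη1 : η < 1 := lt_of_lt_of_le hηδ hδ1
  have hηδ1 : η * δ < 1 := by nlinarith
  have hs0 : 0 < s := by
    rw [hs]; exact mul_pos (div_pos (by linarith) (by linarith)) hη0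
  have hsη : s ≤ η := by
    rw [hs]
    have h1 : (δ - η) / (1 - η * δ) ≤ 1 := by
      rw [div_le_one (by linarith)]; nlinarith
    nlinarith [h1]
  have hw1 : ‖w‖ < 1 := by linarith
  rcases eq_or_lt_of_le hδ1 with hδeq | hδlt
  · -- δ = 1 : f is a rotation
    set c := deriv f 0 with hc
    have hc1 : ‖c‖ = 1 := by rw [hδ]; exact hδeq
    have hmaps' : Set.MapsTo f (ball 0 1) (ball (f 0) 1) := by rwa [hf0]
    have heq := Complex.affine_of_mapsTo_ball_of_exists_norm_dslope_eq_div
      (c := (0:ℂ)) (R₁ := 1) (R₂ := 1) hdiff (hmaps'.mono_right ball_subset_closedBall) (mem_ball_self one_pos)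
      (by rw [dslope_same, ← hc, hc1]; norm_num)
    have hf : ∀ z ∈ ball (0:ℂ) 1, f z = c * z := by
      intro z hz
      have h2 := heq hz
      simp only [hf0, dslope_same, smul_eq_mul, sub_zero, zero_add] at h2
      rw [h2, ← hc]; ring
    have hc0 : c ≠ 0 := by
      intro h; rw [h] at hc1; simp at hc1
    have hsη' : s = η := by
      rw [hs, hδeq]; rw [mul_one]; rw [div_self (by linarith)]; ring
    rw [hsη'] at hw
    have hball : ∀ y : ℂ, ‖y‖ < η → y ∈ ball (0:ℂ) 1 := fun y hy =>
      mem_ball_zero_iff.2 (by linarith)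
    refine ⟨w / c, ⟨?_, ?_⟩, ?_⟩
    · rw [norm_div, hc1, div_one]; exact hw
    · rw [hf _ (hball _ (by rw [norm_div, hc1, div_one]; exact hw))]
      field_simp
    · rintro y ⟨hy1, hy2⟩
      rw [hf y (hball y hy1)] at hy2
      field_simp [hc0]
      rw [mul_comm] at hy2
      exact hy2
  · -- δ < 1
    have hball1 : ∀ y : ℂ, ‖y‖ ≤ η → y ∈ ball (0:ℂ) 1 := fun y hy =>
      mem_ball_zero_iff.2 (by linarith)
    have hseq : s * (1 - η * δ) = (δ - η) * η := by
      rw [hs, div_mul_eq_mul_div, div_mul_cancel₀ _ (show (1:ℝ) - η * δ ≠ 0 by linarith)]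
    have hsph : ∀ z : ℂ, ‖z‖ = η → s ≤ ‖(f z)‖ := by
      intro z hz
      have h3 := schwarz_pick_lower hdiff hmaps hf0 hδ hδlt (hball1 z hz.le)
      rw [hz] at h3
      nlinarith [h3, hseq]
    -- existence
    have hAn : AnalyticOnNhd ℂ f (ball 0 1) := hdiff.analyticOnNhd isOpen_ball
    have hηmem : (η : ℂ) ∈ ball (0:ℂ) 1 := hball1 _ (by
      rw [Complex.norm_real, Real.norm_eq_abs, abs_of_pos hη0])
    have hηabs : ‖((η : ℝ) : ℂ)‖ = η := by rw [Complex.norm_real, Real.norm_eq_abs, abs_of_pos hη0]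
    have hnc : ¬ ∃ c : ℂ, ∀ z ∈ ball (0:ℂ) 1, f z = c := by
      rintro ⟨c, hcon⟩
      have h1 := hcon 0 (mem_ball_self one_pos)
      have h2 := hcon _ hηmem
      rw [hf0] at h1
      have h4 := hsph (η : ℂ) hηabs
      rw [h2, ← h1] at h4
      simp at h4
      linarith
    have hopen : IsOpen (f '' (ball 0 η)) := by
      rcases hAn.is_constant_or_isOpen (convex_ball (0:ℂ) 1).isPreconnected with h | h
      · exact absurd ⟨h.choose, h.choose_spec⟩ hnc
      · exact h (ball 0 η) (ball_subset_ball hη1.le) isOpen_ball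
    have hK : IsCompact (f '' (closedBall 0 η)) :=
      (isCompact_closedBall (0:ℂ) η).image_of_continuousOn
        (hdiff.continuousOn.mono (closedBall_subset_ball hη1))
    have hvopen : IsOpen (f '' (closedBall 0 η))ᶜ := hK.isClosed.isOpen_compl
    have hcover : ball (0:ℂ) s ⊆ (f '' (ball 0 η)) ∪ (f '' (closedBall 0 η))ᶜ := by
      intro x hx
      by_cases hxK : x ∈ f '' (closedBall 0 η)
      · left
        obtain ⟨z, hz, rfl⟩ := hxK
        have hzle : ‖z‖ ≤ η := by
          exact mem_closedBall_zero_iff.1 hz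
        rcases lt_or_eq_of_le hzle with h5 | h5
        · exact ⟨z, mem_ball_zero_iff.2 (by exact h5), rfl⟩
        · exfalso
          have h6 := hsph z h5
          have h7 : ‖(f z)‖ < s := by
            rw [← mem_ball_zero_iff]; exact hx
          linarith
      · right; exact hxK
    have hexists : ∃ z : ℂ, ‖z‖ < η ∧ f z = w := by
      have hwmem : w ∈ ball (0:ℂ) s := mem_ball_zero_iff.2 (by exact hw)
      have hwu : w ∈ f '' (ball 0 η) := by
        by_contra hwu
        have hwv : w ∈ (f '' (closedBall 0 η))ᶜ := (hcover hwmem).resolve_left hwu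
        obtain ⟨x, hx1, hx2, hx3⟩ := (convex_ball (0:ℂ) s).isPreconnected _ _ hopen hvopen
          hcover ⟨0, mem_ball_self hs0, ⟨0, mem_ball_self hη0, hf0⟩⟩ ⟨w, hwmem, hwv⟩
        exact hx3 ((image_mono ball_subset_closedBall) hx2)
      obtain ⟨z, hz, hfz⟩ := hwu
      exact ⟨z, by exact mem_ball_zero_iff.1 hz, hfz⟩
    -- uniqueness
    have huniq : ∀ y1 y2 : ℂ, (‖y1‖ < η ∧ f y1 = w) →
        (‖y2‖ < η ∧ f y2 = w) → y1 = y2 := by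
      intro y1 y2 ⟨ha1, ha2⟩ ⟨hb1, hb2⟩
      by_cases hw0 : w = 0
      · have hzero : ∀ y : ℂ, ‖y‖ < η → f y = w → y = 0 := by
          intro y hy hfy
          by_contra hy0
          have hyp : 0 < ‖y‖ := norm_pos_iff.mpr hy0
          have h8 := schwarz_pick_lower hdiff hmaps hf0 hδ hδlt (hball1 y hy.le)
          rw [hfy, hw0] at h8
          simp only [norm_zero, zero_mul] at h8
          nlinarith
        rw [hzero y1 ha1 ha2, hzero y2 hb1 hb2]
      · by_contra hne
        have hy10 : y1 ≠ 0 := fun h => hw0 (by rw [← ha2, h, hf0])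
        have hy20 : y2 ≠ 0 := fun h => hw0 (by rw [← hb2, h, hf0])
        set F := fun z => (f z - w) / (1 - (starRingEnd ℂ) w * f z) with hF
        have hden : ∀ z ∈ ball (0:ℂ) 1, (1 : ℂ) - (starRingEnd ℂ) w * f z ≠ 0 := by
          intro z hz h9
          have h10 : ‖((starRingEnd ℂ) w * f z)‖ < 1 := by
            rw [norm_mul, Complex.norm_conj]
            have := mem_ball_zero_iff.1 (hmaps hz)
            nlinarith [norm_nonneg w, norm_nonneg (f z)]
          rw [sub_eq_zero] at h9
          rw [← h9] at h10
          simp at h10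
        have hFd : DifferentiableOn ℂ F (ball 0 1) :=
          DifferentiableOn.div (hdiff.sub (differentiableOn_const w))
            ((differentiableOn_const 1).sub ((differentiableOn_const _).mul hdiff)) hden
        have hFm : Set.MapsTo F (ball 0 1) (ball 0 1) := by
          intro z hz
          rw [mem_ball_zero_iff]
          refine mobius_lt_one ?_ hw1
          have := mem_ball_zero_iff.1 (hmaps hz)
          exact this
        have hF1 : F y1 = 0 := by rw [hF]; simp only [ha2, sub_self, zero_div]
        have hF2 : F y2 = 0 := by rw [hF]; simp only [hb2, sub_self, zero_div]
        have hbl := blaschke_two_zeros hFd hFm (hball1 y1 ha1.le) (hball1 y2 hb1.le) hne hF1 hF2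
        have hF0 : ‖(F 0)‖ = ‖w‖ := by
          rw [hF]; simp [hf0]
        rw [hF0] at hbl
        -- the real arithmetic contradiction
        have hlow2 := schwarz_pick_lower hdiff hmaps hf0 hδ hδlt (hball1 y2 hb1.le)
        rw [hb2] at hlow2
        set aa := ‖y1‖
        set bb := ‖y2‖
        set m := ‖w‖
        have haa0 : 0 < aa := norm_pos_iff.mpr hy10
        have hbb0 : 0 < bb := norm_pos_iff.mpr hy20
        have hm0 : 0 < m := norm_pos_iff.mpr hw0
        have hδbb : 0 < 1 - δ * bb := by nlinarith
        have hδη : 0 < 1 - δ * η := by nlinarith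
        have key1 : δ * (1 + aa * bb) ≤ aa + bb := by
          have h' : bb * (δ - bb) ≤ aa * bb * (1 - δ * bb) :=
            le_trans hlow2 (mul_le_mul_of_nonneg_right hbl hδbb.le)
          nlinarith [h', hbb0]
        have key2 : δ * (1 + η * bb) ≤ η + bb := by
          nlinarith [key1, mul_nonneg (sub_nonneg.2 ha1.le) hδbb.le]
        have key3 : η * (δ - η) * (1 - δ * bb) ≤ bb * (δ - bb) * (1 - δ * η) := by
          nlinarith [mul_nonneg (sub_nonneg.2 hb1.le) (sub_nonneg.2 key2)]
        have c1 : m * (1 - η * δ) < (δ - η) * η := by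
          rw [hs, div_mul_eq_mul_div, lt_div_iff₀ (by linarith)] at hw
          linarith [hw]
        have c2 := mul_lt_mul_of_pos_right c1 hδbb
        have c3 := mul_le_mul_of_nonneg_right hlow2 hδη.le
        linarith [c2, c3, key3]
    obtain ⟨z, hz⟩ := hexists
    exact ⟨z, hz, fun y hy => huniq y z hy hz⟩
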